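/- Assume n ≥ 3, f̲_0 = f̄_0 = 0, f̄_j = 1 for all j ∈ {1,…,n}, and 0 ≤ d < 1. Then the affine span of S (equivalently, of conv(S)) in ℝ^n × ℝ^{n+1} has dimension 2n − 1. -/
import Mathlib
open scoped BigOperators

def phiMap (n : ℕ) : ((Fin n → ℝ) × (Fin (n+1) → ℝ)) →ₗ[ℝ] ℝ × ℝ where
  toFun p := (p.2 0, ∑ j, p.2 j)
  map_add' p q := by ext <;> simp [Finset.sum_add_distrib]
  map_smul' c p := by ext <;> simp [Finset.mul_sum]

theorem phi_surj (n : ℕ) (hn : 3 ≤ n) : Function.Surjective (phiMap n) := by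
  intro ⟨a, b⟩
  refine ⟨(0, Pi.single 0 a + Pi.single 1 (b - a)), ?_⟩
  have hval1 : ((1:Fin (n+1)) : ℕ) = 1 := by
    show 1 % (n+1) = 1; exact Nat.mod_eq_of_lt (by omega)
  have h01 : (0 : Fin (n+1)) ≠ 1 := by
    intro h; have := congrArg Fin.val h; rw [hval1] at this; simp at this
  simp [phiMap, Pi.single_apply, h01, Finset.sum_add_distrib, Finset.sum_pi_single']

theorem finrank_ker_phi (n : ℕ) (hn : 3 ≤ n) :
    Module.finrank ℝ (LinearMap.ker (phiMap n)) = 2*n - 1 := by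
  have h := LinearMap.finrank_range_add_finrank_ker (phiMap n)
  rw [LinearMap.range_eq_top.2 (phi_surj n hn), finrank_top] at h
  have h2 : Module.finrank ℝ (ℝ × ℝ) = 2 := by simp
  have hE : Module.finrank ℝ ((Fin n → ℝ) × (Fin (n+1) → ℝ)) = 2*n+1 := by
    simp [Module.finrank_prod]; ring
  rw [h2, hE] at h
  omega

theorem dim_S (n : ℕ) (hn : 3 ≤ n)
    (d : ℝ) (hd0 : 0 ≤ d) (hd : d < 1)
    (S : Set ((Fin n → ℝ) × (Fin (n + 1) → ℝ)))
    (hS : S = {p | (∀ j, p.1 j = 0 ∨ p.1 j = 1) ∧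
      (∑ j, p.2 j) = d ∧ p.2 0 = 0 ∧
      ∀ j : Fin n, -(p.1 j) ≤ p.2 j.succ ∧ p.2 j.succ ≤ p.1 j}) :
    Module.finrank ℝ (affineSpan ℝ S).direction = 2 * n - 1 := by
  -- Fin index facts
  set i0 : Fin n := ⟨0, by omega⟩ with hi0
  set i1 : Fin n := ⟨1, by omega⟩ with hi1
  have hval2 : ((2:Fin (n+1)) : ℕ) = 2 := by
    show 2 % (n+1) = 2; exact Nat.mod_eq_of_lt (by omega)
  have hval1 : ((1:Fin (n+1)) : ℕ) = 1 := by
    show 1 % (n+1) = 1; exact Nat.mod_eq_of_lt (by omega)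
  have h01 : (0 : Fin (n+1)) ≠ 1 := by
    intro h; have := congrArg Fin.val h; rw [hval1] at this; simp at this
  have h02 : (0 : Fin (n+1)) ≠ 2 := by
    intro h; have := congrArg Fin.val h; rw [hval2] at this; simp at this
  have h12 : (1 : Fin (n+1)) ≠ 2 := by
    intro h; have := congrArg Fin.val h; rw [hval1, hval2] at this; simp at this
  have hsucc0 : i0.succ = 1 := by
    apply Fin.ext; rw [Fin.val_succ, hval1]
  have hsucc1 : i1.succ = 2 := by
    apply Fin.ext; rw [Fin.val_succ, hval2]
  have hsucc_ne0 : ∀ j : Fin n, j.succ ≠ 0 := fun j => Fin.succ_ne_zero j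
  have hsucc_eq1 : ∀ j : Fin n, (j.succ = 1 ↔ j = i0) := by
    intro j; rw [← hsucc0, Fin.succ_inj]
  rw [direction_affineSpan]
  have hspan : vectorSpan ℝ S = LinearMap.ker (phiMap n) := by
    apply le_antisymm
    · rw [vectorSpan_def, Submodule.span_le]
      rintro v ⟨p, hp, q, hq, rfl⟩
      rw [hS] at hp hq
      obtain ⟨-, hp2, hp3, -⟩ := hp
      obtain ⟨-, hq2, hq3, -⟩ := hq
      simp only [SetLike.mem_coe, LinearMap.mem_ker]
      have hpq : (p -ᵥ q) = p - q := rfl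
      ext
      · simp [phiMap, hpq, hp3, hq3]
      · simp [phiMap, hpq, Finset.sum_sub_distrib, hp2, hq2]
    · -- ker ≤ vectorSpan
      set p0 : (Fin n → ℝ) × (Fin (n+1) → ℝ) := (fun _ => 1, Pi.single 1 d) with hp0def
      have hp0 : p0 ∈ S := by
        rw [hS]
        refine ⟨fun j => Or.inr rfl, ?_, ?_, ?_⟩
        · simp [hp0def, Finset.sum_pi_single']
        · simp [hp0def, Pi.single_apply, h01]
        · intro j
          simp only [hp0def, Pi.single_apply]
          split_ifs <;> constructor <;> linarith
      set bVec : Fin n → (Fin n → ℝ) × (Fin (n+1) → ℝ) :=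
        fun j => (0, Pi.single (1:Fin (n+1)) (1:ℝ) - Pi.single j.succ 1) with hbdef
      set aVec : Fin n → (Fin n → ℝ) × (Fin (n+1) → ℝ) :=
        fun j => (Pi.single j (1:ℝ), 0) with hadef
      have hb : ∀ j : Fin n, bVec j ∈ vectorSpan ℝ S := by
        intro j
        by_cases hj : j = i0
        · have : bVec j = 0 := by simp [hbdef, hj, hsucc0]
          rw [this]; exact Submodule.zero_mem _
        · set sj : (Fin n → ℝ) × (Fin (n+1) → ℝ) :=
            (fun _ => 1, Pi.single 1 1 + Pi.single j.succ (d-1)) with hsjdef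
          have hne : (1:Fin (n+1)) ≠ j.succ := fun h => hj ((hsucc_eq1 j).1 h.symm)
          have hsj : sj ∈ S := by
            rw [hS]
            refine ⟨fun j => Or.inr rfl, ?_, ?_, ?_⟩
            · simp only [hsjdef, Pi.add_apply]
              rw [Finset.sum_add_distrib]
              simp [Finset.sum_pi_single']
            · simp [hsjdef, Pi.single_apply, h01, Ne.symm (hsucc_ne0 j)]
            · intro k
              simp only [hsjdef, Pi.add_apply, Pi.single_apply]
              split_ifs <;> constructor <;> linarith
          have hkey : p0 -ᵥ sj = (d-1) • bVec j := by
            have hvs : p0 -ᵥ sj = p0 - sj := rfl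
            rw [hvs]
            ext k
            · simp [hp0def, hsjdef, hbdef]
            · simp only [hp0def, hsjdef, hbdef, Prod.snd_sub, Prod.smul_snd, Pi.sub_apply,
                Pi.add_apply, Pi.smul_apply, Pi.single_apply, smul_eq_mul]
              split_ifs <;> ring
          have hd1 : d - 1 ≠ 0 := by linarith
          have hbj : bVec j = (d-1)⁻¹ • (p0 -ᵥ sj) := by
            rw [hkey, smul_smul, inv_mul_cancel₀ hd1, one_smul]
          rw [hbj]
          exact Submodule.smul_mem _ _ (vsub_mem_vectorSpan ℝ hp0 hsj)
      have ha : ∀ j : Fin n, aVec j ∈ vectorSpan ℝ S := by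
        intro j
        by_cases hj : j = i0
        · -- aVec i0 = (p0 -ᵥ r) - d • bVec i1
          set r : (Fin n → ℝ) × (Fin (n+1) → ℝ) :=
            (Function.update (fun _ => 1) i0 0, Pi.single 2 d) with hrdef
          have hr : r ∈ S := by
            rw [hS]
            refine ⟨?_, ?_, ?_, ?_⟩
            · intro m
              by_cases hm : m = i0 <;> simp [hrdef, Function.update_apply, hm]
            · simp [hrdef, Finset.sum_pi_single']
            · simp [hrdef, Pi.single_apply, h02]
            · intro k
              simp only [hrdef, Function.update_apply, Pi.single_apply]
              have hki : k = i0 → k.succ ≠ 2 := by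
                intro hk; rw [hk, hsucc0]; exact h12
              split_ifs with h1 h2 h2 <;> constructor <;>
                first
                | linarith
                | (exfalso; exact hki h1 h2)
          have hkey : aVec j = (p0 -ᵥ r) - d • bVec i1 := by
            have hvs : p0 -ᵥ r = p0 - r := rfl
            rw [hvs, hj]
            ext k
            · simp only [hadef, hbdef, hp0def, hrdef, Prod.fst_sub, Pi.sub_apply,
                Prod.smul_fst, Function.update_apply, Pi.single_apply, Pi.smul_apply,
                smul_eq_mul, Prod.snd_sub, smul_zero, Pi.zero_apply]
              split_ifs <;> ring
            · simp only [hadef, hbdef, hp0def, hrdef, Prod.snd_sub, Pi.sub_apply,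
                Prod.smul_snd, Pi.single_apply, Pi.smul_apply, smul_eq_mul, hsucc1,
                Pi.zero_apply]
              split_ifs <;> ring
          rw [hkey]
          exact Submodule.sub_mem _ (vsub_mem_vectorSpan ℝ hp0 hr)
            (Submodule.smul_mem _ _ (hb i1))
        · -- p0 -ᵥ qj
          set qj : (Fin n → ℝ) × (Fin (n+1) → ℝ) :=
            (Function.update (fun _ => 1) j 0, Pi.single 1 d) with hqdef
          have hq : qj ∈ S := by
            rw [hS]
            refine ⟨?_, ?_, ?_, ?_⟩
            · intro m
              by_cases hm : m = j <;> simp [hqdef, Function.update_apply, hm]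
            · simp [hqdef, Finset.sum_pi_single']
            · simp [hqdef, Pi.single_apply, h01]
            · intro k
              simp only [hqdef, Function.update_apply, Pi.single_apply]
              have hki : k = j → k.succ ≠ 1 := by
                intro hk h1; rw [hk] at h1; exact hj ((hsucc_eq1 j).1 h1)
              split_ifs with h1 h2 h2 <;> constructor <;>
                first
                | linarith
                | (exfalso; exact hki h1 h2)
          have hkey : aVec j = p0 -ᵥ qj := by
            have hvs : p0 -ᵥ qj = p0 - qj := rfl
            rw [hvs]
            ext k
            · simp only [hadef, hp0def, hqdef, Prod.fst_sub, Pi.sub_apply,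
                Function.update_apply, Pi.single_apply]
              split_ifs <;> ring
            · simp [hadef, hp0def, hqdef]
          rw [hkey]
          exact vsub_mem_vectorSpan ℝ hp0 hq
      -- decomposition
      intro w hw
      rw [LinearMap.mem_ker] at hw
      have hw0 : w.2 0 = 0 := congrArg Prod.fst hw
      have hwsum : ∑ j, w.2 j = 0 := congrArg Prod.snd hw
      have hs : ∑ j : Fin n, w.2 j.succ = 0 := by
        rw [Fin.sum_univ_succ] at hwsum; linarith
      have hdecomp : w = ∑ j, w.1 j • aVec j + ∑ j : Fin n, (- w.2 j.succ) • bVec j := by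
        have key : ∑ j : Fin n, (-w.2 j.succ) • (Pi.single (1:Fin (n+1)) (1:ℝ) - Pi.single j.succ (1:ℝ) : Fin (n+1) → ℝ) = w.2 := by
          have e1 : ∀ j : Fin n, (-w.2 j.succ) • (Pi.single (1:Fin (n+1)) (1:ℝ) - Pi.single j.succ (1:ℝ) : Fin (n+1) → ℝ)
              = (Pi.single (1:Fin (n+1)) (-w.2 j.succ) - Pi.single j.succ (-w.2 j.succ) : Fin (n+1) → ℝ) := by
            intro j
            rw [smul_sub, ← Pi.single_smul', ← Pi.single_smul']
            simp
          rw [Finset.sum_congr rfl (fun j _ => e1 j), Finset.sum_sub_distrib]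
          have e2 : ∑ j : Fin n, Pi.single (1:Fin (n+1)) (-w.2 j.succ) = (0 : Fin (n+1) → ℝ) := by
            funext k
            simp only [Finset.sum_apply, Pi.single_apply, Pi.zero_apply]
            by_cases hk : k = 1
            · rw [Finset.sum_congr rfl (fun j _ => if_pos hk)]
              rw [Finset.sum_neg_distrib, hs, neg_zero]
            · simp [hk]
          have e3 : ∑ j : Fin n, Pi.single j.succ (-w.2 j.succ) = -w.2 := by
            funext k
            simp only [Finset.sum_apply, Pi.single_apply, Pi.neg_apply]
            induction k using Fin.cases with
            | zero =>
              rw [hw0, neg_zero]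
              apply Finset.sum_eq_zero
              intro j _
              rw [if_neg (Ne.symm (hsucc_ne0 j))]
            | succ m =>
              have hiff : ∀ j : Fin n, (m.succ = j.succ) ↔ (j = m) := by
                intro j; rw [Fin.succ_inj]; exact eq_comm
              simp only [hiff]
              simp
          rw [e2, e3]
          simp
        ext k
        · simp only [Prod.fst_add, Prod.fst_sum, Prod.smul_fst, hadef, hbdef, Pi.add_apply,
            Finset.sum_apply, Pi.smul_apply, Pi.single_apply, smul_eq_mul, mul_zero, smul_zero]
          simp [Finset.sum_ite_eq]
        · have h2 : (∑ j, w.1 j • aVec j).2 = 0 := by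
            rw [Prod.snd_sum]
            simp [hadef]
          have h3 : (∑ j : Fin n, (- w.2 j.succ) • bVec j).2
              = ∑ j : Fin n, (-w.2 j.succ) • (Pi.single (1:Fin (n+1)) (1:ℝ) - Pi.single j.succ (1:ℝ) : Fin (n+1) → ℝ) := by
            rw [Prod.snd_sum]
            simp [hbdef]
          rw [Prod.snd_add, h2, h3, key]
          simp
      rw [hdecomp]
      exact Submodule.add_mem _
        (Submodule.sum_mem _ fun j _ => Submodule.smul_mem _ _ (ha j))
        (Submodule.sum_mem _ fun j _ => Submodule.smul_mem _ _ (hb j))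
  rw [hspan]
  exact finrank_ker_phi n hn
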